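/- arXiv:1109.4130 — 5 statements merged into one kernel-verified Lean document; each statement's English description precedes it below -/
import Mathlib

section
/- Let M be a matroid on the ground set [n] = {1,...,n} with no loops and no coloops, let B be a basis of M, and let v ∈ ℝ^n be a vector such that B is a basis of maximal v-weight (i.e., Σ_{i∈B} v_i is maximal among all bases of M). Then v lies in the tropical linear space Trop(M) if and only if for every element e ∈ [n] − B the minimum min{v_i : i ∈ C(e,B)} over the fundamental circuit C(e,B) is attained at least twice. -/
/-- `C` is a circuit of the matroid `M`: a minimal dependent subset of the ground set. -/
def IsCircuitOf {α : Type*} (M : Matroid α) (C : Set α) : Prop :=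
  C ⊆ M.E ∧ ¬ M.Indep C ∧ ∀ D, D ⊂ C → M.Indep D

/-- The fundamental circuit `C(e,B)` of `e` over `B`: the unique circuit of `M`
contained in `B ∪ {e}` (realized as the intersection of all such circuits). -/
def fundCircuitOf {α : Type*} (M : Matroid α) (e : α) (B : Set α) : Set α :=
  ⋂₀ {C | IsCircuitOf M C ∧ C ⊆ insert e B}

/-- The minimum of `v` over `C` is attained at least twice. -/
def MinAttainedTwice {n : ℕ} (v : Fin n → ℝ) (C : Set (Fin n)) : Prop :=
  ∃ j ∈ C, ∃ k ∈ C, j ≠ k ∧ v j = v k ∧ ∀ i ∈ C, v j ≤ v i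

/-- `v` lies in the tropical linear space `Trop(M)`: for every circuit `C` of `M`,
the minimum of `v` over `C` is attained at least twice. -/
def InTrop {n : ℕ} (M : Matroid (Fin n)) (v : Fin n → ℝ) : Prop :=
  ∀ C, IsCircuitOf M C → MinAttainedTwice v C

/-- The `v`-weight of a set `B`, i.e. `∑ i ∈ B, v i`. -/
noncomputable def weightOf {n : ℕ} (v : Fin n → ℝ) (B : Set (Fin n)) : ℝ :=
  ∑ i, B.indicator v i

section Aux

open Set

variable {α : Type*} {M : Matroid α} {B C C₁ C₂ D X : Set α} {e f : α}

lemma IsCircuitOf.dep (hC : IsCircuitOf M C) : M.Dep C := ⟨hC.2.1, hC.1⟩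

/-- Every finite dependent set contains a circuit. -/
lemma exists_circuitOf_subset (hfin : D.Finite) (hD : M.Dep D) :
    ∃ C, C ⊆ D ∧ IsCircuitOf M C := by
  have H : ∀ k (D : Set α), D.Finite → M.Dep D → D.ncard = k →
      ∃ C, C ⊆ D ∧ IsCircuitOf M C := by
    intro k
    induction k using Nat.strong_induction_on with
    | _ k ih =>
      intro D hfin hD hk
      by_cases h : ∀ D', D' ⊂ D → M.Indep D'
      · exact ⟨D, subset_rfl, hD.subset_ground, hD.not_indep, h⟩
      · push_neg at h
        obtain ⟨D', hss, hdep⟩ := h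
        obtain ⟨C, hCD, hC⟩ := ih _ (hk ▸ Set.ncard_lt_ncard hss hfin) D'
          (hfin.subset hss.subset) ⟨hdep, hss.subset.trans hD.subset_ground⟩ rfl
        exact ⟨C, hCD.trans hss.subset, hC⟩
  exact H _ D hfin hD rfl

lemma IsCircuitOf.mem_closure (hC : IsCircuitOf M C) (he : e ∈ C) :
    e ∈ M.closure (C \ {e}) := by
  have hI : M.Indep (C \ {e}) := hC.2.2 _ (Set.sdiff_singleton_ssubset.2 he)
  have hdep : M.Dep (insert e (C \ {e})) := by
    rw [Set.insert_diff_singleton, Set.insert_eq_self.2 he]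
    exact hC.dep
  exact (hI.insert_dep_iff.1 hdep).1

lemma exists_circuitOf_of_mem_closure (hXfin : X.Finite) (hXE : X ⊆ M.E)
    (hf : f ∈ M.closure X) (hfX : f ∉ X) :
    ∃ C, IsCircuitOf M C ∧ f ∈ C ∧ C ⊆ insert f X := by
  obtain ⟨I, hI⟩ := M.exists_isBasis X hXE
  have hfI : f ∈ M.closure I := by rw [hI.closure_eq_closure]; exact hf
  have hdep : M.Dep (insert f I) :=
    hI.indep.insert_dep_iff.2 ⟨hfI, fun h => hfX (hI.subset h)⟩
  obtain ⟨C, hCsub, hC⟩ :=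
    exists_circuitOf_subset ((hXfin.subset hI.subset).insert f) hdep
  refine ⟨C, hC, ?_, hCsub.trans (Set.insert_subset_insert hI.subset)⟩
  by_contra hfC
  exact hC.2.1 (hI.indep.subset (fun x hx => ((hCsub hx).resolve_left
    (fun h => hfC (h ▸ hx)))))

/-- Strong circuit elimination. -/
lemma strong_elim (hC₁ : IsCircuitOf M C₁) (hC₂ : IsCircuitOf M C₂)
    (hfin : (C₁ ∪ C₂).Finite)
    (he₁ : e ∈ C₁) (he₂ : e ∈ C₂) (hf₁ : f ∈ C₁) (hf₂ : f ∉ C₂) :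
    ∃ C₃, IsCircuitOf M C₃ ∧ f ∈ C₃ ∧ C₃ ⊆ (C₁ ∪ C₂) \ {e} := by
  have hfe : f ≠ e := fun h => hf₂ (h ▸ he₂)
  set X := (C₁ ∪ C₂) \ {e, f} with hXdef
  have hXE : X ⊆ M.E := diff_subset.trans (union_subset hC₁.1 hC₂.1)
  have heX : e ∈ M.closure X := by
    refine M.closure_subset_closure ?_ (hC₂.mem_closure he₂)
    intro x hx
    exact ⟨Or.inr hx.1, by rintro (rfl | rfl); exacts [hx.2 rfl, hf₂ hx.1]⟩
  have hfcl : f ∈ M.closure X := by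
    have h2 : C₁ \ {f} ⊆ insert e X := by
      intro x hx
      rcases eq_or_ne x e with rfl | hne
      · exact mem_insert _ _
      · exact Or.inr ⟨Or.inl hx.1, by rintro (rfl | rfl); exacts [hne rfl, hx.2 rfl]⟩
    have h3 : insert e X ⊆ M.closure X :=
      insert_subset heX (M.subset_closure X hXE)
    exact M.closure_subset_closure_of_subset_closure h3
      (M.closure_subset_closure h2 (hC₁.mem_closure hf₁))
  have hfX : f ∉ X := fun h => h.2 (Or.inr rfl)
  obtain ⟨C₃, hC₃, hfC₃, hsub⟩ :=
    exists_circuitOf_of_mem_closure (hfin.subset diff_subset) hXE hfcl hfX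
  refine ⟨C₃, hC₃, hfC₃, hsub.trans ?_⟩
  intro x hx
  rcases hx with rfl | hx
  · exact ⟨Or.inl hf₁, by simpa using hfe⟩
  · exact ⟨hx.1, fun h => hx.2 (by simp at h; simp [h])⟩

lemma circuit_mem_insert (hB : M.IsBase B) (hC : IsCircuitOf M C)
    (hCB : C ⊆ insert e B) : e ∈ C := by
  by_contra he
  exact hC.2.1 (hB.indep.subset (fun x hx => ((hCB hx).resolve_left
    (fun h => he (h ▸ hx)))))

/-- Uniqueness of the circuit inside `insert e B` for a base `B`. -/
lemma circuit_insert_unique [Finite α] (hB : M.IsBase B) (hC : IsCircuitOf M C)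
    (hCB : C ⊆ insert e B) (hC' : IsCircuitOf M C') (hC'B : C' ⊆ insert e B) :
    C = C' := by
  have heC : e ∈ C := circuit_mem_insert hB hC hCB
  have heC' : e ∈ C' := circuit_mem_insert hB hC' hC'B
  by_contra hne
  have hns : ¬ C ⊆ C' := by
    intro hss
    exact hC.2.1 (hC'.2.2 _ (ssubset_of_subset_of_ne hss hne))
  obtain ⟨f, hfC, hfC'⟩ := not_subset.1 hns
  obtain ⟨C₃, hC₃, hfC₃, hsub⟩ :=
    strong_elim hC hC' (Set.toFinite _) heC heC' hfC hfC'
  refine hC₃.2.1 (hB.indep.subset ?_)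
  intro x hx
  have := hsub hx
  rcases this.1 with h | h
  · exact (hCB h).resolve_left (fun h' => this.2 (by simp [h']))
  · exact (hC'B h).resolve_left (fun h' => this.2 (by simp [h']))

theorem fundCircuitOf_spec [Finite α] (hB : M.IsBase B) (heB : e ∉ B) (heE : e ∈ M.E) :
    IsCircuitOf M (fundCircuitOf M e B) ∧ e ∈ fundCircuitOf M e B ∧
      fundCircuitOf M e B ⊆ insert e B := by
  have hdep : M.Dep (insert e B) := hB.insert_dep ⟨heE, heB⟩
  obtain ⟨C₀, hC₀B, hC₀⟩ := exists_circuitOf_subset (Set.toFinite _) hdep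
  have hset : {C | IsCircuitOf M C ∧ C ⊆ insert e B} = {C₀} := by
    ext C
    simp only [mem_setOf_eq, mem_singleton_iff]
    constructor
    · rintro ⟨h1, h2⟩
      exact circuit_insert_unique hB h1 h2 hC₀ hC₀B
    · rintro rfl; exact ⟨hC₀, hC₀B⟩
  have : fundCircuitOf M e B = C₀ := by
    rw [fundCircuitOf, hset, sInter_singleton]
  rw [this]
  exact ⟨hC₀, circuit_mem_insert hB hC₀ hC₀B, hC₀B⟩

end Aux

section Weight

open Set

lemma sum_indicator_singleton {n : ℕ} (v : Fin n → ℝ) (f : Fin n) :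
    ∑ i, ({f} : Set (Fin n)).indicator v i = v f := by
  simp [Set.indicator_apply]

lemma weight_exchange {n : ℕ} (v : Fin n → ℝ) {B : Set (Fin n)} {e f : Fin n}
    (hf : f ∈ B) (he : e ∉ B) :
    weightOf v (insert e B \ {f}) = weightOf v B + v e - v f := by
  have hef : e ≠ f := fun h => he (h ▸ hf)
  have key : ∀ i, (insert e B \ {f}).indicator v i + ({f} : Set (Fin n)).indicator v i
      = B.indicator v i + ({e} : Set (Fin n)).indicator v i := by
    intro i
    rcases eq_or_ne i e with rfl | hie
    · simp [Set.indicator_apply, he, hef]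
    rcases eq_or_ne i f with rfl | hif
    · simp [Set.indicator_apply, hf, hie]
    · have hmem : i ∈ insert e B \ {f} ↔ i ∈ B := by simp [hie, hif]
      have hf0 : ({f} : Set (Fin n)).indicator v i = 0 :=
        Set.indicator_of_notMem (by simp [hif]) v
      have he0 : ({e} : Set (Fin n)).indicator v i = 0 :=
        Set.indicator_of_notMem (by simp [hie]) v
      by_cases hiB : i ∈ B
      · rw [Set.indicator_of_mem (hmem.2 hiB) v, Set.indicator_of_mem hiB v, hf0, he0]
      · rw [Set.indicator_of_notMem (fun h => hiB (hmem.1 h)) v,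
          Set.indicator_of_notMem hiB v, hf0, he0]
  have hsum : weightOf v (insert e B \ {f}) + v f = weightOf v B + v e := by
    rw [← sum_indicator_singleton v f, ← sum_indicator_singleton v e, weightOf, weightOf,
      ← Finset.sum_add_distrib, ← Finset.sum_add_distrib]
    exact Finset.sum_congr rfl (fun i _ => key i)
  linarith

end Weight

/-- For a matroid `M` on `[n]` with no loops and no coloops, a basis `B` of
`M`, and a vector `v` for which `B` has maximal `v`-weight, `v` lies in `Trop(M)` if and
only if for every `e ∉ B` the minimum of `v` over the fundamental circuit `C(e,B)` is
attained at least twice. -/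
theorem statement0 {n : ℕ} (M : Matroid (Fin n)) (hE : M.E = Set.univ)
    (hloops : ∀ e, M.Indep {e})
    (hcoloops : ∀ e, ∃ B, M.IsBase B ∧ e ∉ B)
    (B : Set (Fin n)) (hB : M.IsBase B)
    (v : Fin n → ℝ)
    (hmax : ∀ B', M.IsBase B' → weightOf v B' ≤ weightOf v B) :
    InTrop M v ↔ ∀ e ∉ B, MinAttainedTwice v (fundCircuitOf M e B) := by
  have hground : ∀ x : Fin n, x ∈ M.E := by simp [hE]
  -- the minimality of `v e` on the fundamental circuit of `e`
  have hmin : ∀ e ∉ B, ∀ i ∈ fundCircuitOf M e B, v e ≤ v i := by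
    intro e heB i hi
    obtain ⟨hcirc, heD, hDsub⟩ := fundCircuitOf_spec hB heB (hground e)
    rcases eq_or_ne i e with rfl | hie
    · exact le_rfl
    have hiB : i ∈ B := (hDsub hi).resolve_left hie
    -- `insert e B \ {i}` is independent
    have hindep : M.Indep (insert e B \ {i}) := by
      by_contra hni
      have hdep : M.Dep (insert e B \ {i}) :=
        ⟨hni, fun x _ => hground x⟩
      obtain ⟨C', hC'sub, hC'⟩ := exists_circuitOf_subset (Set.toFinite _) hdep
      have : C' = fundCircuitOf M e B := by
        have := fundCircuitOf_spec hB heB (hground e)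
        exact circuit_insert_unique hB hC' (hC'sub.trans Set.diff_subset) this.1 this.2.2
      have : i ∈ insert e B \ {i} := hC'sub (this ▸ hi)
      exact this.2 rfl
    have hbase : M.IsBase (insert e B \ {i}) :=
      hB.exchange_isBase_of_indep' hiB heB hindep
    have := hmax _ hbase
    rw [weight_exchange v hiB heB] at this
    linarith
  constructor
  · intro h e heB
    exact h _ (fundCircuitOf_spec hB heB (hground e)).1
  · intro hfund
    -- strong induction on (C \ B).ncard
    suffices H : ∀ k, ∀ C, IsCircuitOf M C → (C \ B).ncard ≤ k → MinAttainedTwice v C by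
      intro C hC
      exact H _ C hC le_rfl
    intro k
    induction k with
    | zero =>
      intro C hC hcard
      exfalso
      have : C \ B = ∅ := by
        have := Set.ncard_eq_zero (Set.toFinite (C \ B))
        exact this.1 (Nat.le_zero.1 hcard)
      exact hC.2.1 (hB.indep.subset (Set.diff_eq_empty.1 this))
    | succ k ih =>
      intro C hC hcard
      by_contra hnot
      -- C has a minimizer x, unique
      have hCne : C.Nonempty := hC.dep.nonempty
      obtain ⟨x, hxC, hxmin⟩ := Set.exists_min_image C v (Set.toFinite C) hCne
      have hstrict : ∀ i ∈ C, i ≠ x → v x < v i := by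
        intro i hi hix
        rcases lt_or_eq_of_le (hxmin i hi) with h | h
        · exact h
        · exact absurd ⟨x, hxC, i, hi, hix.symm, h, hxmin⟩ hnot
      have hCBne : (C \ B).Nonempty := by
        rw [Set.nonempty_iff_ne_empty]
        intro h
        exact hC.2.1 (hB.indep.subset (Set.diff_eq_empty.1 h))
      by_cases hcase : ∃ e ∈ C \ B, e ≠ x
      · obtain ⟨e, heCB, hex⟩ := hcase
        obtain ⟨heC, heB⟩ := heCB
        obtain ⟨hDcirc, heD, hDsub⟩ := fundCircuitOf_spec hB heB (hground e)
        set D := fundCircuitOf M e B with hDdef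
        have hvxe : v x < v e := hstrict e heC hex
        have hxD : x ∉ D := by
          intro hxD
          exact absurd (hmin e heB x hxD) (not_le.2 hvxe)
        obtain ⟨C₃, hC₃, hxC₃, hsub⟩ :=
          strong_elim hC hDcirc (Set.toFinite _) heC heD hxC hxD
        -- the strict minimum property propagates to C₃
        have hstrict₃ : ∀ i ∈ C₃, i ≠ x → v x < v i := by
          intro i hi hix
          have hi' := hsub hi
          rcases hi'.1 with h | h
          · exact hstrict i h hix
          · exact lt_of_lt_of_le hvxe (hmin e heB i h)
        -- C₃ \ B is smaller
        have hsub₃ : C₃ \ B ⊆ (C \ B) \ {e} := by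
          intro i hi
          have hi' := hsub hi.1
          rcases hi'.1 with h | h
          · exact ⟨⟨h, hi.2⟩, hi'.2⟩
          · exact absurd ((hDsub h).resolve_left (fun h' => hi'.2 (by simp [h'])))
              hi.2
        have hcard₃ : (C₃ \ B).ncard ≤ k := by
          have h1 : (C₃ \ B).ncard ≤ ((C \ B) \ {e}).ncard :=
            Set.ncard_le_ncard hsub₃ (Set.toFinite _)
          have h2 : ((C \ B) \ {e}).ncard < (C \ B).ncard :=
            Set.ncard_diff_singleton_lt_of_mem ⟨heC, heB⟩ (Set.toFinite _)
          omega
        obtain ⟨j, hj, kk, hkk, hjk, heq, hminj⟩ := ih C₃ hC₃ hcard₃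
        rcases eq_or_ne j x with rfl | hjx
        · exact absurd (hminj kk hkk) (not_le.2 (heq ▸ hstrict₃ kk hkk (Ne.symm hjk)))
        · exact absurd (hminj x hxC₃) (not_le.2 (hstrict₃ j hj hjx))
      · -- C \ B = {x}
        push_neg at hcase
        obtain ⟨e, heCB⟩ := hCBne
        have hex : e = x := hcase e heCB
        subst hex
        have hCsub : C ⊆ insert e B := by
          intro i hi
          by_cases hiB : i ∈ B
          · exact Set.mem_insert_of_mem _ hiB
          · rw [hcase i ⟨hi, hiB⟩]; exact Set.mem_insert _ _
        obtain ⟨hDcirc, heD, hDsub⟩ := fundCircuitOf_spec hB heCB.2 (hground e)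
        have hCeq : C = fundCircuitOf M e B :=
          circuit_insert_unique hB hC hCsub hDcirc hDsub
        exact hnot (hCeq ▸ hfund e heCB.2)
end

section
/- Let M be a matroid on the ground set [n] = {1,...,n} with no loops and no coloops, and let B be a basis of M. For any function x : B → ℝ, define the vector f_B(x) ∈ ℝ^n by f_B(x)_i = x_i if i ∈ B, and f_B(x)_i = min{x_j : j ∈ C(i,B) − {i}} if i ∉ B. Then B is a basis of maximal f_B(x)-weight and f_B(x) lies in the tropical linear space Trop(M); that is, f_B(x) lies in the local tropical linear space Trop(M)_B. -/
namespace TropAux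

open Set

variable {n : ℕ}

lemma exists_circuit_aux (M : Matroid (Fin n)) (hE : M.E = Set.univ) :
    ∀ (k : ℕ) (D : Set (Fin n)), D.ncard ≤ k → ¬ M.Indep D →
      ∃ C, C ⊆ D ∧ IsCircuitOf M C := by
  intro k
  induction k with
  | zero =>
    intro D hcard hD
    have h0 : D = ∅ := (Set.ncard_eq_zero D.toFinite).1 (Nat.le_zero.1 hcard)
    exact absurd (h0 ▸ M.empty_indep) hD
  | succ k IH =>
    intro D hcard hD
    by_cases h : ∀ D', D' ⊂ D → M.Indep D'
    · exact ⟨D, subset_rfl, ⟨by rw [hE]; exact Set.subset_univ D, hD, h⟩⟩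
    · push_neg at h
      obtain ⟨D', hss, hD'⟩ := h
      have hlt : D'.ncard ≤ k := by
        have := Set.ncard_lt_ncard hss D.toFinite
        omega
      obtain ⟨C, hCD', hC⟩ := IH D' hlt hD'
      exact ⟨C, hCD'.trans hss.subset, hC⟩

lemma exists_circuit (M : Matroid (Fin n)) (hE : M.E = Set.univ) {D : Set (Fin n)}
    (hD : ¬ M.Indep D) : ∃ C, C ⊆ D ∧ IsCircuitOf M C :=
  exists_circuit_aux M hE D.ncard D le_rfl hD

lemma circ_diff_indep {M : Matroid (Fin n)} {C : Set (Fin n)} (hC : IsCircuitOf M C)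
    {i : Fin n} (hi : i ∈ C) : M.Indep (C \ {i}) := by
  refine hC.2.2 _ ?_
  refine Set.ssubset_iff_subset_ne.mpr ⟨Set.diff_subset, fun h => ?_⟩
  have : i ∈ C \ {i} := h.symm ▸ hi
  exact this.2 rfl

lemma circ_mem_closure_diff {M : Matroid (Fin n)} {C : Set (Fin n)}
    (hC : IsCircuitOf M C) {i : Fin n} (hi : i ∈ C) : i ∈ M.closure (C \ {i}) := by
  have hind := circ_diff_indep hC hi
  rw [hind.mem_closure_iff]
  left
  rw [Set.insert_diff_singleton, Set.insert_eq_of_mem hi]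
  exact ⟨hC.2.1, hC.1⟩

lemma weak_elim (M : Matroid (Fin n)) (hE : M.E = Set.univ) {C₁ C₂ : Set (Fin n)}
    (h₁ : IsCircuitOf M C₁) (h₂ : IsCircuitOf M C₂) (hne : C₁ ≠ C₂) {e : Fin n}
    (he₁ : e ∈ C₁) (he₂ : e ∈ C₂) : ¬ M.Indep ((C₁ ∪ C₂) \ {e}) := by
  intro hI
  obtain ⟨f, hf₁, hf₂⟩ : ∃ f, f ∈ C₁ ∧ f ∉ C₂ := by
    by_contra h
    push_neg at h
    exact h₁.2.1 (h₂.2.2 _ (ssubset_of_subset_of_ne h hne))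
  obtain ⟨J, hJ, hssJ⟩ := (circ_diff_indep h₁ hf₁).subset_isBasis_of_subset
      (Set.diff_subset.trans Set.subset_union_left) (by rw [hE]; exact Set.subset_univ _)
  have hfJ : f ∉ J := by
    intro hfJ
    refine h₁.2.1 (hJ.indep.subset fun x hx => ?_)
    by_cases hxf : x = f
    · exact hxf ▸ hfJ
    · exact hssJ ⟨hx, hxf⟩
  obtain ⟨g, hg₂, hgJ⟩ : ∃ g, g ∈ C₂ ∧ g ∉ J := by
    by_contra h
    push_neg at h
    exact h₂.2.1 (hJ.indep.subset h)
  have hgf : g ≠ f := fun h => hf₂ (h ▸ hg₂)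
  have hcard : J.encard < ((C₁ ∪ C₂) \ {e}).encard := by
    have hJsub : J ⊆ ((C₁ ∪ C₂) \ {f}) \ {g} := by
      intro x hx
      exact ⟨⟨hJ.subset hx, fun h => hfJ (h ▸ hx)⟩, fun h => hgJ (h ▸ hx)⟩
    calc J.encard ≤ (((C₁ ∪ C₂) \ {f}) \ {g}).encard := Set.encard_le_encard hJsub
      _ < ((C₁ ∪ C₂) \ {f}).encard := by
          refine ((((C₁ ∪ C₂) \ {f}) \ {g}).toFinite).encard_lt_encard ?_
          refine Set.ssubset_iff_subset_ne.mpr ⟨Set.diff_subset, fun h => ?_⟩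
          have hgmem : g ∈ ((C₁ ∪ C₂) \ {f}) \ {g} := by
            rw [h]
            exact ⟨Set.mem_union_right _ hg₂, hgf⟩
          exact hgmem.2 rfl
      _ = (C₁ ∪ C₂).encard - 1 := Set.encard_diff_singleton_of_mem (Set.mem_union_left _ hf₁)
      _ = ((C₁ ∪ C₂) \ {e}).encard := (Set.encard_diff_singleton_of_mem (Set.mem_union_left _ he₁)).symm
  obtain ⟨y, hy, hyJ⟩ := hJ.indep.augment hI hcard
  exact (hJ.insert_dep ⟨hy.1.1, hy.2⟩).not_indep hyJ

lemma circuit_of_mem_closure (M : Matroid (Fin n)) (hE : M.E = Set.univ) {Y : Set (Fin n)}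
    {f : Fin n} (hf : f ∈ M.closure Y) (hfY : f ∉ Y) :
    ∃ C, IsCircuitOf M C ∧ f ∈ C ∧ C ⊆ insert f Y := by
  obtain ⟨I, hI⟩ := M.exists_isBasis Y (by rw [hE]; exact Set.subset_univ _)
  have hfI : f ∈ M.closure I := by rwa [hI.closure_eq_closure]
  have hdep : ¬ M.Indep (insert f I) :=
    ((hI.indep.insert_dep_iff).mpr ⟨hfI, fun h => hfY (hI.subset h)⟩).not_indep
  obtain ⟨C, hCsub, hC⟩ := exists_circuit M hE hdep
  have hfC : f ∈ C := by
    by_contra hfC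
    refine hC.2.1 (hI.indep.subset fun x hx => ?_)
    rcases hCsub hx with h | h
    · exact absurd (h ▸ hx) hfC
    · exact h
  exact ⟨C, hC, hfC, hCsub.trans (Set.insert_subset_insert hI.subset)⟩

lemma strong_elim (M : Matroid (Fin n)) (hE : M.E = Set.univ) {C₁ C₂ : Set (Fin n)}
    (h₁ : IsCircuitOf M C₁) (h₂ : IsCircuitOf M C₂) {e f : Fin n}
    (he₁ : e ∈ C₁) (he₂ : e ∈ C₂) (hf₁ : f ∈ C₁) (hf₂ : f ∉ C₂) :
    ∃ C₃, IsCircuitOf M C₃ ∧ f ∈ C₃ ∧ C₃ ⊆ (C₁ ∪ C₂) \ {e} := by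
  set Y : Set (Fin n) := (C₁ ∪ C₂) \ {e, f} with hY
  have hef : e ≠ f := fun h => hf₂ (h ▸ he₂)
  have heY : e ∈ M.closure Y := by
    refine M.closure_subset_closure (fun x hx => ?_) (circ_mem_closure_diff h₂ he₂)
    refine ⟨Set.mem_union_right _ hx.1, ?_⟩
    rintro (rfl | rfl)
    · exact hx.2 rfl
    · exact hf₂ hx.1
  have hfcl : f ∈ M.closure Y := by
    have h1 : f ∈ M.closure (C₁ \ {f}) := circ_mem_closure_diff h₁ hf₁
    have h2 : C₁ \ {f} ⊆ insert e Y := by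
      intro x hx
      by_cases hxe : x = e
      · exact Set.mem_insert_iff.2 (Or.inl hxe)
      · refine Set.mem_insert_iff.2 (Or.inr ⟨Set.mem_union_left _ hx.1, ?_⟩)
        rintro (rfl | rfl)
        · exact hxe rfl
        · exact hx.2 rfl
    have h3 := M.closure_subset_closure h2 h1
    rwa [Matroid.closure_insert_eq_of_mem_closure heY] at h3
  have hfnY : f ∉ Y := fun h => h.2 (Or.inr rfl)
  obtain ⟨C₃, hC₃, hfC₃, hsub⟩ := circuit_of_mem_closure M hE hfcl hfnY
  refine ⟨C₃, hC₃, hfC₃, hsub.trans ?_⟩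
  intro x hx
  rcases hx with rfl | hx
  · exact ⟨Set.mem_union_left _ hf₁, fun h => hef (h.symm)⟩
  · exact ⟨hx.1, fun h => hx.2 (Or.inl h)⟩

lemma fundCircuit_spec (M : Matroid (Fin n)) (hE : M.E = Set.univ) {B : Set (Fin n)}
    (hB : M.IsBase B) {i : Fin n} (hi : i ∉ B) :
    IsCircuitOf M (fundCircuitOf M i B) ∧ i ∈ fundCircuitOf M i B ∧
      fundCircuitOf M i B ⊆ insert i B ∧
      ∀ C, IsCircuitOf M C → C ⊆ insert i B → C = fundCircuitOf M i B := by
  have hdep : ¬ M.Indep (insert i B) :=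
    (hB.insert_dep ⟨by rw [hE]; trivial, hi⟩).not_indep
  obtain ⟨C₀, hC₀sub, hC₀⟩ := exists_circuit M hE hdep
  have hmem : ∀ C, IsCircuitOf M C → C ⊆ insert i B → i ∈ C := by
    intro C hC hsub
    by_contra hiC
    refine hC.2.1 (hB.indep.subset fun x hx => ?_)
    rcases hsub hx with h | h
    · exact absurd (h ▸ hx) hiC
    · exact h
  have huniq : ∀ C, IsCircuitOf M C → C ⊆ insert i B → C = C₀ := by
    intro C hC hsub
    by_contra hne
    refine weak_elim M hE hC hC₀ hne (hmem C hC hsub) (hmem C₀ hC₀ hC₀sub)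
      (hB.indep.subset ?_)
    intro x hx
    have hxi : x ≠ i := fun h => hx.2 h
    rcases hx.1 with h | h
    · rcases hsub h with h' | h'
      · exact absurd h' hxi
      · exact h'
    · rcases hC₀sub h with h' | h'
      · exact absurd h' hxi
      · exact h'
  have hfund : fundCircuitOf M i B = C₀ := by
    apply subset_antisymm
    · exact Set.sInter_subset_of_mem ⟨hC₀, hC₀sub⟩
    · refine Set.subset_sInter fun C hC => ?_
      rw [huniq C hC.1 hC.2]
  refine ⟨hfund ▸ hC₀, hfund ▸ hmem C₀ hC₀ hC₀sub, hfund ▸ hC₀sub, fun C hC hsub => ?_⟩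
  rw [huniq C hC hsub, hfund]

lemma exchange_step (M : Matroid (Fin n)) (hE : M.E = Set.univ) {B B' : Set (Fin n)}
    (hB : M.IsBase B) (hB' : M.IsBase B') {i : Fin n} (hiB' : i ∈ B') (hiB : i ∉ B) :
    ∃ j, j ∈ fundCircuitOf M i B ∧ j ∈ B ∧ j ∉ B' ∧ M.IsBase (insert j (B' \ {i})) := by
  obtain ⟨hCc, hiC, hCsub, _⟩ := fundCircuit_spec M hE hB hiB
  have hBd : M.Indep (B' \ {i}) := hB'.indep.subset Set.diff_subset
  have hex : ∃ j ∈ fundCircuitOf M i B \ {i}, j ∉ M.closure (B' \ {i}) := by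
    by_contra h
    push_neg at h
    have hsub : fundCircuitOf M i B \ {i} ⊆ M.closure (B' \ {i}) := fun j hj => h j hj
    have : i ∈ M.closure (B' \ {i}) :=
      Matroid.closure_subset_closure_of_subset_closure hsub (circ_mem_closure_diff hCc hiC)
    exact hB'.indep.notMem_closure_diff_of_mem hiB' this
  obtain ⟨j, hjC, hjcl⟩ := hex
  have hjB : j ∈ B := by
    rcases hCsub hjC.1 with h | h
    · exact absurd h hjC.2
    · exact h
  have hjB' : j ∉ B' := by
    intro hj
    exact hjcl (M.mem_closure_of_mem ⟨hj, hjC.2⟩ (by rw [hE]; exact Set.subset_univ _))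
  have hji : j ≠ i := fun h => hjC.2 h
  have hind : M.Indep (insert j (B' \ {i})) := by
    rw [hBd.insert_indep_iff_of_notMem (fun h => hjB' h.1)]
    exact ⟨by rw [hE]; trivial, hjcl⟩
  have hbase : M.IsBase (insert j B' \ {i}) := by
    refine hB'.exchange_isBase_of_indep' hiB' hjB' ?_
    rwa [← Set.insert_diff_singleton_comm hji]
  rw [← Set.insert_diff_singleton_comm hji] at hbase
  exact ⟨j, hjC.1, hjB, hjB', hbase⟩

lemma weight_exchange (v : Fin n → ℝ) {S : Set (Fin n)} {i j : Fin n}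
    (hi : i ∈ S) (hj : j ∉ S) :
    weightOf v (insert j (S \ {i})) = weightOf v S - v i + v j := by
  classical
  have hne : j ≠ i := fun h => hj (h ▸ hi)
  have hpt : ∀ a, (insert j (S \ {i})).indicator v a
      = S.indicator v a - ({i} : Set (Fin n)).indicator v a
        + ({j} : Set (Fin n)).indicator v a := by
    intro a
    by_cases haj : a = j
    · subst haj
      simp [Set.indicator_apply, hj, hne]
    · by_cases hai : a = i
      · subst hai
        simp [Set.indicator_apply, hi, fun h => haj h, Ne.symm hne]
      · simp [Set.indicator_apply, haj, hai]
  have h1 : ∑ a, ({i} : Set (Fin n)).indicator v a = v i := by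
    simp [Set.indicator_apply]
  have h2 : ∑ a, ({j} : Set (Fin n)).indicator v a = v j := by
    simp [Set.indicator_apply]
  rw [weightOf, weightOf]
  simp_rw [hpt]
  rw [Finset.sum_add_distrib, Finset.sum_sub_distrib, h1, h2]

end TropAux

/-- For a matroid `M` on `[n]` with no loops and no coloops, a basis `B`, and
any assignment `x` of real values to the elements of `B`, the vector `v = f_B(x)` defined
by `v i = x i` for `i ∈ B` and `v i = min { x j : j ∈ C(i,B) - {i} }` for `i ∉ B` lies in
the local tropical linear space `Trop(M)_B`: the basis `B` has maximal `v`-weight and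
`v ∈ Trop(M)`. -/
theorem statement1 {n : ℕ} (M : Matroid (Fin n)) (hE : M.E = Set.univ)
    (hloops : ∀ e, M.Indep {e})
    (hcoloops : ∀ e, ∃ B, M.IsBase B ∧ e ∉ B)
    (B : Set (Fin n)) (hB : M.IsBase B)
    (x : Fin n → ℝ) (v : Fin n → ℝ)
    (hvB : ∀ i ∈ B, v i = x i)
    (hvnB : ∀ i ∉ B, v i = sInf (x '' (fundCircuitOf M i B \ {i}))) :
    (∀ B', M.IsBase B' → weightOf v B' ≤ weightOf v B) ∧ InTrop M v := by
  have hfc := fun (i : Fin n) (hi : i ∉ B) => TropAux.fundCircuit_spec M hE hB hi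
  -- the set C(i,B) \ {i} is nonempty
  have hCne : ∀ i, i ∉ B → (fundCircuitOf M i B \ {i}).Nonempty := by
    intro i hi
    obtain ⟨hC, hiC, hsub, _⟩ := hfc i hi
    rcases Set.eq_empty_or_nonempty (fundCircuitOf M i B \ {i}) with h | h
    · exfalso
      have hsub' : fundCircuitOf M i B ⊆ {i} := by
        intro y hy
        by_contra hyi
        exact Set.eq_empty_iff_forall_notMem.1 h y ⟨hy, hyi⟩
      exact hC.2.1 ((hloops i).subset hsub')
    · exact h
  -- v i is a lower bound for v on C(i,B) \ {i}
  have hvle : ∀ i, i ∉ B → ∀ j ∈ fundCircuitOf M i B, j ≠ i → v i ≤ v j := by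
    intro i hi j hj hji
    obtain ⟨hC, hiC, hsub, _⟩ := hfc i hi
    have hjB : j ∈ B := by
      rcases hsub hj with h | h
      · exact absurd h hji
      · exact h
    rw [hvnB i hi, hvB j hjB]
    exact csInf_le (((fundCircuitOf M i B \ {i}).toFinite.image x).bddBelow)
      ⟨j, ⟨hj, hji⟩, rfl⟩
  -- the value v i is attained on C(i,B) \ {i}
  have hvex : ∀ i, i ∉ B → ∃ j ∈ fundCircuitOf M i B, j ≠ i ∧ v j = v i := by
    intro i hi
    have hne := hCne i hi
    have hmem : sInf (x '' (fundCircuitOf M i B \ {i})) ∈ x '' (fundCircuitOf M i B \ {i}) :=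
      (hne.image x).csInf_mem ((fundCircuitOf M i B \ {i}).toFinite.image x)
    obtain ⟨j, hj, hxj⟩ := hmem
    obtain ⟨hC, hiC, hsub, _⟩ := hfc i hi
    have hjB : j ∈ B := by
      rcases hsub hj.1 with h | h
      · exact absurd h hj.2
      · exact h
    exact ⟨j, hj.1, fun h => hj.2 h, by rw [hvB j hjB, hvnB i hi, hxj]⟩
  -- key inductive claim for the tropical condition
  have tropkey : ∀ k : ℕ, ∀ C : Set (Fin n), (C \ B).ncard ≤ k → IsCircuitOf M C →
      ∀ a ∈ C, (∀ b ∈ C, v a ≤ v b) → ∃ j ∈ C, j ≠ a ∧ v j = v a := by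
    intro k
    induction k with
    | zero =>
      intro C hcard hC a ha hmin
      exfalso
      have h0 : C \ B = ∅ := (Set.ncard_eq_zero (C \ B).toFinite).1 (Nat.le_zero.1 hcard)
      exact hC.2.1 (hB.indep.subset (Set.diff_eq_empty.1 h0))
    | succ k IH =>
      intro C hcard hC a ha hmin
      by_contra hcon
      push_neg at hcon
      have hstrict : ∀ b ∈ C, b ≠ a → v a < v b := fun b hb hba =>
        lt_of_le_of_ne (hmin b hb) fun h => hcon b hb hba h.symm
      have hCB : ¬ C ⊆ B := fun h => hC.2.1 (hB.indep.subset h)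
      obtain ⟨i₀, hi₀C, hi₀B⟩ := Set.not_subset.1 hCB
      by_cases hex : ∃ i ∈ C, i ∉ B ∧ i ≠ a
      · obtain ⟨i, hiC, hiB, hia⟩ := hex
        obtain ⟨hCi, hiCi, hsubi, _⟩ := hfc i hiB
        have hvia : v a < v i := hstrict i hiC hia
        have haCi : a ∉ fundCircuitOf M i B := by
          intro haC
          exact absurd (hvle i hiB a haC (fun h => hia h.symm)) (not_le.2 hvia)
        obtain ⟨C₃, hC₃, haC₃, hsub₃⟩ := TropAux.strong_elim M hE hC hCi hiC hiCi ha haCi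
        have hmin₃ : ∀ b ∈ C₃, v a ≤ v b := by
          intro b hb
          obtain ⟨hbU, hbi⟩ := hsub₃ hb
          rcases hbU with hbC | hbCi
          · exact hmin b hbC
          · exact le_trans hvia.le (hvle i hiB b hbCi (fun h => hbi h))
        have hC₃B : C₃ \ B ⊆ (C \ B) \ {i} := by
          intro b hb
          obtain ⟨hbC₃, hbB⟩ := hb
          obtain ⟨hbU, hbi⟩ := hsub₃ hbC₃
          rcases hbU with h | h
          · exact ⟨⟨h, hbB⟩, hbi⟩
          · rcases hsubi h with h' | h'
            · exact absurd h' (fun h'' => hbi h'')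
            · exact absurd h' hbB
        have hcard₃ : (C₃ \ B).ncard ≤ k := by
          have h1 : (C₃ \ B).ncard ≤ ((C \ B) \ {i}).ncard :=
            Set.ncard_le_ncard hC₃B ((C \ B) \ {i}).toFinite
          have h2 : ((C \ B) \ {i}).ncard = (C \ B).ncard - 1 :=
            Set.ncard_diff_singleton_of_mem (s := C \ B) ⟨hiC, hiB⟩
          have h3 : 0 < (C \ B).ncard := (Set.ncard_pos (C \ B).toFinite).2 ⟨i, hiC, hiB⟩
          omega
        obtain ⟨j, hjC₃, hja, hjv⟩ := IH C₃ hcard₃ hC₃ a haC₃ hmin₃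
        obtain ⟨hjU, hji⟩ := hsub₃ hjC₃
        rcases hjU with h | h
        · exact hcon j h hja hjv
        · have hlt : v a < v j := lt_of_lt_of_le hvia (hvle i hiB j h fun h' => hji h')
          exact absurd hjv (ne_of_gt hlt)
      · push_neg at hex
        have hi₀a : i₀ = a := hex i₀ hi₀C hi₀B
        have haB : a ∉ B := hi₀a ▸ hi₀B
        have hsubins : C ⊆ insert a B := by
          intro b hb
          by_cases hbB : b ∈ B
          · exact Set.mem_insert_iff.2 (Or.inr hbB)
          · exact Set.mem_insert_iff.2 (Or.inl (hex b hb hbB))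
        obtain ⟨hCa, haCa, hsuba, huniqa⟩ := hfc a haB
        have hCeq : C = fundCircuitOf M a B := huniqa C hC hsubins
        obtain ⟨j, hjC, hja, hjv⟩ := hvex a haB
        rw [← hCeq] at hjC
        exact hcon j hjC hja hjv
  -- the tropical condition
  have htrop : InTrop M v := by
    intro C hC
    have hne : C.Nonempty := by
      rcases Set.eq_empty_or_nonempty C with h | h
      · exact absurd (by rw [h]; exact M.empty_indep) hC.2.1
      · exact h
    obtain ⟨a, ha, hmin⟩ := Set.exists_min_image C v C.toFinite hne
    obtain ⟨j, hjC, hja, hjv⟩ := tropkey (C \ B).ncard C le_rfl hC a ha hmin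
    exact ⟨a, ha, j, hjC, Ne.symm hja, hjv.symm, hmin⟩
  -- the weight-maximality
  have wkey : ∀ k : ℕ, ∀ B' : Set (Fin n), (B' \ B).ncard ≤ k → M.IsBase B' →
      weightOf v B' ≤ weightOf v B := by
    intro k
    induction k with
    | zero =>
      intro B' hcard hB'
      have h0 : B' \ B = ∅ := (Set.ncard_eq_zero (B' \ B).toFinite).1 (Nat.le_zero.1 hcard)
      rw [hB'.eq_of_subset_isBase hB (Set.diff_eq_empty.1 h0)]
    | succ k IH =>
      intro B' hcard hB'
      rcases Set.eq_empty_or_nonempty (B' \ B) with h0 | hne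
      · rw [hB'.eq_of_subset_isBase hB (Set.diff_eq_empty.1 h0)]
      · obtain ⟨i, hiB', hiB⟩ := hne
        obtain ⟨j, hjC, hjB, hjB', hbase⟩ := TropAux.exchange_step M hE hB hB' hiB' hiB
        have hji : j ≠ i := fun h => hiB (h ▸ hjB)
        have hvij : v i ≤ v j := hvle i hiB j hjC hji
        have hw : weightOf v (insert j (B' \ {i})) = weightOf v B' - v i + v j :=
          TropAux.weight_exchange v hiB' hjB'
        have hseteq : (insert j (B' \ {i})) \ B = (B' \ B) \ {i} := by
          ext b
          simp only [Set.mem_diff, Set.mem_insert_iff, Set.mem_singleton_iff]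
          constructor
          · rintro ⟨rfl | ⟨h1, h2⟩, h3⟩
            · exact absurd hjB h3
            · exact ⟨⟨h1, h3⟩, h2⟩
          · rintro ⟨⟨h1, h3⟩, h2⟩
            exact ⟨Or.inr ⟨h1, h2⟩, h3⟩
        have hcard' : ((insert j (B' \ {i})) \ B).ncard ≤ k := by
          rw [hseteq]
          have h2 : ((B' \ B) \ {i}).ncard = (B' \ B).ncard - 1 :=
            Set.ncard_diff_singleton_of_mem (s := B' \ B) ⟨hiB', hiB⟩
          have h3 : 0 < (B' \ B).ncard := (Set.ncard_pos (B' \ B).toFinite).2 ⟨i, hiB', hiB⟩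
          omega
        have hIH := IH (insert j (B' \ {i})) hcard' hbase
        linarith
  exact ⟨fun B' hB' => wkey (B' \ B).ncard B' le_rfl hB', htrop⟩
end

section
/- Let M be a matroid on the ground set [n] = {1,...,n} with no loops and no coloops, let B be a basis of M, and let v ∈ Trop(M) be such that B is a basis of maximal v-weight. Then for every k ∈ [n] − B, v_k = min{v_j : j ∈ C(k,B) − {k}}. In particular, a vector in the local tropical linear space Trop(M)_B is determined by its coordinates indexed by B. -/
section Aux

variable {α : Type*} {M : Matroid α}

/-- In a finite dependent set there is a circuit. -/
lemma exists_circuit_subset_aux (M : Matroid α) :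
    ∀ m : ℕ, ∀ D : Set α, D.Finite → D.ncard ≤ m → D ⊆ M.E → ¬ M.Indep D →
      ∃ C, C ⊆ D ∧ IsCircuitOf M C := by
  intro m
  induction m with
  | zero =>
    intro D hfin hcard hDE hD
    rw [Nat.le_zero, Set.ncard_eq_zero hfin] at hcard
    exact absurd (hcard ▸ M.empty_indep) hD
  | succ m ih =>
    intro D hfin hcard hDE hD
    by_cases h : ∀ D', D' ⊂ D → M.Indep D'
    · exact ⟨D, subset_rfl, hDE, hD, h⟩
    · push_neg at h
      obtain ⟨D', hD'sub, hD'dep⟩ := h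
      have hlt : D'.ncard < D.ncard := Set.ncard_lt_ncard hD'sub hfin
      obtain ⟨C, hC1, hC2⟩ := ih D' (hfin.subset hD'sub.subset) (by omega)
        (hD'sub.subset.trans hDE) hD'dep
      exact ⟨C, hC1.trans hD'sub.subset, hC2⟩

lemma exists_circuit_subset {D : Set α} (hfin : D.Finite) (hDE : D ⊆ M.E)
    (hD : ¬ M.Indep D) : ∃ C, C ⊆ D ∧ IsCircuitOf M C :=
  exists_circuit_subset_aux M D.ncard D hfin le_rfl hDE hD

/-- Circuit elimination (weak form, finite). -/
lemma circuit_elim {C₁ C₂ : Set α} (h₁ : IsCircuitOf M C₁) (h₂ : IsCircuitOf M C₂)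
    (hfin : (C₁ ∪ C₂).Finite) (hne : C₁ ≠ C₂) {e : α} (he₁ : e ∈ C₁) (he₂ : e ∈ C₂) :
    ¬ M.Indep ((C₁ ∪ C₂) \ {e}) := by
  intro hIndep
  obtain ⟨f, hf₁, hf₂⟩ : ∃ f, f ∈ C₁ ∧ f ∉ C₂ := by
    by_contra h
    push_neg at h
    exact h₁.2.1 (h₂.2.2 C₁ (HasSubset.Subset.ssubset_of_ne h hne))
  have hI₁ : M.Indep (C₁ \ {f}) := h₁.2.2 _ (Set.sdiff_singleton_ssubset.mpr hf₁)
  have hXE : C₁ ∪ C₂ ⊆ M.E := Set.union_subset h₁.1 h₂.1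
  obtain ⟨I, hIbasis, hsubI⟩ := hI₁.subset_isBasis_of_subset
    ((Set.diff_subset).trans Set.subset_union_left) hXE
  have hfI : f ∉ I := by
    intro hfI
    refine h₁.2.1 (hIbasis.indep.subset fun x hx => ?_)
    by_cases hxf : x = f
    · exact hxf ▸ hfI
    · exact hsubI ⟨hx, hxf⟩
  obtain ⟨g, hg₂, hgI⟩ : ∃ g, g ∈ C₂ ∧ g ∉ I := by
    by_contra h
    push_neg at h
    exact h₂.2.1 (hIbasis.indep.subset h)
  have hgf : g ≠ f := fun h => hf₂ (h ▸ hg₂)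
  have hsub2 : I ⊆ ((C₁ ∪ C₂) \ {f}) \ {g} := fun x hx =>
    ⟨⟨hIbasis.subset hx, fun h => hfI (h ▸ hx)⟩, fun h => hgI (h ▸ hx)⟩
  have heX : e ∈ C₁ ∪ C₂ := Or.inl he₁
  have hfX : f ∈ C₁ ∪ C₂ := Or.inl hf₁
  have hgX : g ∈ (C₁ ∪ C₂) \ {f} := ⟨Or.inr hg₂, hgf⟩
  have e1 : ((C₁ ∪ C₂) \ {e}).encard + 1 = (C₁ ∪ C₂).encard :=
    Set.encard_diff_singleton_add_one heX
  have e2 : (((C₁ ∪ C₂) \ {f}) \ {g}).encard + 1 + 1 = (C₁ ∪ C₂).encard := by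
    rw [Set.encard_diff_singleton_add_one hgX, Set.encard_diff_singleton_add_one hfX]
  have hle : I.encard ≤ (((C₁ ∪ C₂) \ {f}) \ {g}).encard := Set.encard_mono hsub2
  have hItop : I.encard ≠ ⊤ := ((hfin.subset hIbasis.subset).encard_lt_top).ne
  have hlt : I.encard < ((C₁ ∪ C₂) \ {e}).encard := by
    rw [← ENat.add_one_le_iff hItop]
    have h3 : I.encard + 1 + 1 ≤ ((C₁ ∪ C₂) \ {e}).encard + 1 := by
      calc I.encard + 1 + 1 ≤ (((C₁ ∪ C₂) \ {f}) \ {g}).encard + 1 + 1 :=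
            add_le_add_left (add_le_add_left hle 1) 1
        _ = (C₁ ∪ C₂).encard := e2
        _ = ((C₁ ∪ C₂) \ {e}).encard + 1 := e1.symm
    exact (ENat.add_le_add_iff_right (by simp)).mp h3
  obtain ⟨x, hx, hxIndep⟩ := hIbasis.indep.augment hIndep hlt
  exact (hIbasis.insert_dep ⟨hx.1.1, hx.2⟩).not_indep hxIndep

end Aux

section FinAux

variable {n : ℕ} {M : Matroid (Fin n)}

/-- The fundamental circuit of `k` over a base `B` (with `k ∈ E \ B`) is the unique
circuit contained in `insert k B`; it contains `k`. -/
lemma fundCircuit_spec (hE : M.E = Set.univ) {B : Set (Fin n)} (hB : M.IsBase B)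
    {k : Fin n} (hk : k ∉ B) :
    IsCircuitOf M (fundCircuitOf M k B) ∧ k ∈ fundCircuitOf M k B ∧
      fundCircuitOf M k B ⊆ insert k B := by
  have hkE : k ∈ M.E := by rw [hE]; trivial
  have hdep : ¬ M.Indep (insert k B) := (hB.insert_dep ⟨hkE, hk⟩).not_indep
  obtain ⟨C, hCsub, hC⟩ := exists_circuit_subset (Set.toFinite _)
    (Set.insert_subset hkE hB.subset_ground) hdep
  have hmemk : ∀ C', IsCircuitOf M C' → C' ⊆ insert k B → k ∈ C' := by
    intro C' hC' hsub
    by_contra hkC'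
    refine hC'.2.1 (hB.indep.subset fun x hx => ?_)
    rcases hsub hx with h | h
    · exact absurd (h ▸ hx) hkC'
    · exact h
  have huniq : ∀ C', IsCircuitOf M C' → C' ⊆ insert k B → C' = C := by
    intro C' hC' hsub
    by_contra hne
    have helim := circuit_elim hC' hC (Set.toFinite _) hne (hmemk C' hC' hsub) (hmemk C hC hCsub)
    refine helim (hB.indep.subset fun x hx => ?_)
    rcases (Set.union_subset hsub hCsub) hx.1 with h | h
    · exact absurd h hx.2
    · exact h
  have heq : fundCircuitOf M k B = C := by
    have hset : {C' | IsCircuitOf M C' ∧ C' ⊆ insert k B} = {C} := by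
      ext C'
      simp only [Set.mem_setOf_eq, Set.mem_singleton_iff]
      exact ⟨fun h => huniq C' h.1 h.2, fun h => h ▸ ⟨hC, hCsub⟩⟩
    rw [fundCircuitOf, hset, Set.sInter_singleton]
  rw [heq]
  exact ⟨hC, hmemk C hC hCsub, hCsub⟩

lemma weight_exchange_s2 (v : Fin n → ℝ) {S : Set (Fin n)} {k j : Fin n}
    (hk : k ∉ S) (hj : j ∈ S) :
    weightOf v (insert k (S \ {j})) = weightOf v S + v k - v j := by
  have hkj : k ≠ j := fun h => hk (h ▸ hj)
  have hpt : ∀ i, (insert k (S \ {j})).indicator v i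
      = S.indicator v i + (if i = k then v k else 0) - (if i = j then v j else 0) := by
    intro i
    by_cases hik : i = k
    · subst hik
      simp [Set.indicator, hk, hkj]
    · by_cases hij : i = j
      · subst hij
        simp [Set.indicator, hj, hik]
      · by_cases hiS : i ∈ S
        · rw [Set.indicator_of_mem (show i ∈ insert k (S \ {j}) from Or.inr ⟨hiS, hij⟩) v,
            Set.indicator_of_mem hiS v]
          simp [hik, hij]
        · rw [Set.indicator_of_notMem
            (by simp [Set.mem_insert_iff, hik, hij, hiS] : i ∉ insert k (S \ {j})) v,
            Set.indicator_of_notMem hiS v]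
          simp [hik, hij]
  simp only [weightOf, hpt]
  rw [Finset.sum_sub_distrib, Finset.sum_add_distrib, Finset.sum_ite_eq' Finset.univ k (fun _ => v k),
    Finset.sum_ite_eq' Finset.univ j (fun _ => v j)]
  simp

/-- Key lemma: for `k ∉ B`, `v k = sInf (v '' (C(k,B) \ {k}))`. -/
lemma key_lemma (M : Matroid (Fin n)) (hE : M.E = Set.univ)
    (hloops : ∀ e, M.Indep {e}) {B : Set (Fin n)} (hB : M.IsBase B)
    {v : Fin n → ℝ} (hv : InTrop M v)
    (hmax : ∀ B', M.IsBase B' → weightOf v B' ≤ weightOf v B)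
    {k : Fin n} (hk : k ∉ B) :
    v k = sInf (v '' (fundCircuitOf M k B \ {k})) := by
  obtain ⟨hC, hkC, hCsub⟩ := fundCircuit_spec hE hB hk
  set C := fundCircuitOf M k B with hCdef
  have hCBsub : C \ {k} ⊆ B := by
    intro x hx
    rcases hCsub hx.1 with h | h
    · exact absurd h hx.2
    · exact h
  -- v k ≤ v j for every j ∈ C \ {k}
  have hlb : ∀ j ∈ C \ {k}, v k ≤ v j := by
    intro j hj
    have hjB : j ∈ B := hCBsub hj
    have hindep : M.Indep (insert k (B \ {j})) := by
      by_contra hdep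
      have hsubE : insert k (B \ {j}) ⊆ M.E := by rw [hE]; exact Set.subset_univ _
      obtain ⟨C', hC'sub, hC'⟩ := exists_circuit_subset (Set.toFinite _) hsubE hdep
      have hC'insert : C' ⊆ insert k B := hC'sub.trans
        (Set.insert_subset_insert Set.diff_subset)
      have hCsubC' : C ⊆ C' := by
        rw [hCdef, fundCircuitOf]
        exact Set.sInter_subset_of_mem ⟨hC', hC'insert⟩
      have : C' = C := by
        by_contra hne
        exact hC.2.1 (hC'.2.2 C (hCsubC'.ssubset_of_ne (fun h => hne h.symm)))
      -- j ∈ C = C' but C' avoids j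
      have hjC' : j ∈ C' := this ▸ hj.1
      rcases hC'sub hjC' with h | h
      · exact hj.2 h
      · exact h.2 rfl
    have hbase : M.IsBase (insert k (B \ {j})) := hB.exchange_isBase_of_indep hk hindep
    have := hmax _ hbase
    rw [weight_exchange_s2 v hk hjB] at this
    linarith
  -- min attained twice on C gives a ∈ C \ {k} with v a = min
  obtain ⟨a, ha, b, hb, hab, hvab, hmin⟩ := hv C hC
  have hne : (C \ {k}).Nonempty := by
    obtain ⟨j, hjC, hjk⟩ : ∃ j ∈ C, j ≠ k := by
      by_contra h
      push_neg at h
      have : C = {k} := Set.eq_singleton_iff_unique_mem.mpr ⟨hkC, h⟩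
      exact hC.2.1 (this ▸ hloops k)
    exact ⟨j, hjC, hjk⟩
  obtain ⟨c, hc, hcmin⟩ : ∃ c ∈ C \ {k}, ∀ i ∈ C, v c ≤ v i := by
    by_cases hak : a = k
    · exact ⟨b, ⟨hb, fun h => hab (hak.trans h.symm)⟩,
        fun i hi => hvab ▸ hmin i hi⟩
    · exact ⟨a, ⟨ha, hak⟩, hmin⟩
  have hvck : v c = v k := le_antisymm (hcmin k hkC) (hlb c hc)
  have hbdd : BddBelow (v '' (C \ {k})) := ((Set.toFinite _).image v).bddBelow
  have hnonempty : (v '' (C \ {k})).Nonempty := ⟨v c, c, hc, rfl⟩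
  refine le_antisymm (le_csInf hnonempty ?_) ?_
  · rintro x ⟨j, hj, rfl⟩
    exact hlb j hj
  · calc sInf (v '' (C \ {k})) ≤ v c := csInf_le hbdd ⟨c, hc, rfl⟩
      _ = v k := hvck

end FinAux

/-- For a matroid `M` on `[n]` with no loops and no coloops, a basis `B`, and
a vector `v ∈ Trop(M)` for which `B` has maximal `v`-weight, every coordinate `v k` with
`k ∉ B` equals `min { v j : j ∈ C(k,B) - {k} }`; in particular a vector of the local
tropical linear space `Trop(M)_B` is determined by its coordinates indexed by `B`. -/
theorem statement2 {n : ℕ} (M : Matroid (Fin n)) (hE : M.E = Set.univ)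
    (hloops : ∀ e, M.Indep {e})
    (hcoloops : ∀ e, ∃ B, M.IsBase B ∧ e ∉ B)
    (B : Set (Fin n)) (hB : M.IsBase B)
    (v : Fin n → ℝ) (hv : InTrop M v)
    (hmax : ∀ B', M.IsBase B' → weightOf v B' ≤ weightOf v B) :
    (∀ k ∉ B, v k = sInf (v '' (fundCircuitOf M k B \ {k}))) ∧
    (∀ w : Fin n → ℝ, InTrop M w → (∀ B', M.IsBase B' → weightOf w B' ≤ weightOf w B) →
      (∀ i ∈ B, w i = v i) → w = v) := by
  constructor
  · intro k hk
    exact key_lemma M hE hloops hB hv hmax hk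
  · intro w hw hwmax hagree
    funext i
    by_cases hi : i ∈ B
    · exact hagree i hi
    · obtain ⟨hC, hkC, hCsub⟩ := fundCircuit_spec hE hB hi
      have hCBsub : fundCircuitOf M i B \ {i} ⊆ B := by
        intro x hx
        rcases hCsub hx.1 with h | h
        · exact absurd h hx.2
        · exact h
      have himg : w '' (fundCircuitOf M i B \ {i}) = v '' (fundCircuitOf M i B \ {i}) :=
        Set.image_congr fun x hx => hagree x (hCBsub hx)
      rw [key_lemma M hE hloops hB hw hwmax hi, key_lemma M hE hloops hB hv hmax hi, himg]
end

section
/- Let M be a loopless matroid on the ground set [n] = {1,...,n}, let F ⊆ [n], and let e_F = Σ_{i∈F} e_i ∈ ℝ^n be the 0/1 indicator vector of F. Then e_F lies in the tropical linear space Trop(M) if and only if F is a flat of M. -/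
lemma exists_circuitOf {α : Type*} [Finite α] (M : Matroid α) (X : Set α)
    (hX : X ⊆ M.E) (hdep : ¬ M.Indep X) : ∃ C ⊆ X, IsCircuitOf M C := by
  have key : ∀ k (X : Set α), X.ncard ≤ k → X ⊆ M.E → ¬ M.Indep X →
      ∃ C ⊆ X, IsCircuitOf M C := by
    intro k
    induction k with
    | zero =>
      intro X hk hX hdep
      have : X = ∅ := by
        have := Set.ncard_eq_zero (Set.toFinite X) |>.mp (Nat.le_zero.mp hk)
        exact this
      exact absurd (this ▸ M.empty_indep) hdep
    | succ k ih =>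
      intro X hk hX hdep
      by_cases h : ∀ D, D ⊂ X → M.Indep D
      · exact ⟨X, Set.Subset.rfl, hX, hdep, h⟩
      · push_neg at h
        obtain ⟨D, hDX, hDdep⟩ := h
        have hcard : D.ncard ≤ k := by
          have := Set.ncard_lt_ncard hDX (Set.toFinite X)
          omega
        obtain ⟨C, hCD, hC⟩ := ih D hcard (hDX.subset.trans hX) hDdep
        exact ⟨C, hCD.trans hDX.subset, hC⟩
  exact key X.ncard X le_rfl hX hdep

lemma flat_of_closure_subset {α : Type*} {M : Matroid α} {F : Set α}
    (hFE : F ⊆ M.E) (h : M.closure F ⊆ F) : M.IsFlat F := by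
  refine ⟨fun I X hIF hIX ↦ ?_, hFE⟩
  have h1 : X ⊆ M.closure I := hIX.subset_closure
  have h2 : M.closure I = M.closure F := hIF.closure_eq_closure
  exact (h1.trans (h2.subset.trans h))

/-- For a loopless matroid `M` on `[n]` and `F ⊆ [n]`, the 0/1 indicator
vector `e_F` lies in the tropical linear space `Trop(M)` if and only if `F` is a flat
of `M`. -/
theorem statement8 {n : ℕ} (M : Matroid (Fin n)) (hE : M.E = Set.univ)
    (hloops : ∀ e, M.Indep {e})
    (F : Set (Fin n)) :
    InTrop M (F.indicator fun _ => (1 : ℝ)) ↔ M.IsFlat F := by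
  set v : Fin n → ℝ := F.indicator fun _ => (1 : ℝ) with hv
  have hvF : ∀ i ∈ F, v i = 1 := fun i hi ↦ Set.indicator_of_mem hi _
  have hvnF : ∀ i, i ∉ F → v i = 0 := fun i hi ↦ Set.indicator_of_notMem hi _
  have hvnonneg : ∀ i, 0 ≤ v i := fun i ↦ Set.indicator_nonneg (fun _ _ ↦ zero_le_one) i
  have hFE : F ⊆ M.E := by rw [hE]; exact Set.subset_univ F
  constructor
  · intro hT
    refine flat_of_closure_subset hFE ?_
    intro e he
    by_contra heF
    obtain ⟨I, hI⟩ := M.exists_isBasis F hFE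
    have heI : e ∉ I := fun h ↦ heF (hI.subset h)
    have hecl : e ∈ M.closure I := by rwa [hI.closure_eq_closure]
    have hdep : M.Dep (insert e I) :=
      (hI.indep.mem_closure_iff_of_notMem heI).mp hecl
    obtain ⟨C, hCsub, hC⟩ := exists_circuitOf M (insert e I) hdep.subset_ground hdep.1
    have heC : e ∈ C := by
      by_contra heC
      have : C ⊆ I := fun x hx ↦ (hCsub hx).resolve_left (fun h ↦ heC (h ▸ hx))
      exact hC.2.1 (hI.indep.subset this)
    have hCF : ∀ i ∈ C, i ≠ e → i ∈ F := by
      intro i hi hie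
      exact hI.subset ((hCsub hi).resolve_left hie)
    obtain ⟨j, hjC, k, hkC, hjk, hjkeq, hmin⟩ := hT C hC
    have hve : v e = 0 := hvnF e heF
    by_cases hje : j = e
    · have hke : k ≠ e := fun h ↦ hjk (hje.trans h.symm)
      have : v k = 1 := hvF k (hCF k hkC hke)
      rw [hje, hve] at hjkeq
      linarith
    · have : v j = 1 := hvF j (hCF j hjC hje)
      have := hmin e heC
      rw [hve] at this
      linarith
  · intro hF C hC
    by_cases hCF : C ⊆ F
    · -- all values are 1; C has at least two elements
      have hCne : C.Nonempty := by
        rcases C.eq_empty_or_nonempty with h | h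
        · exact absurd (h ▸ M.empty_indep) hC.2.1
        · exact h
      have hCnt : C.Nontrivial := by
        rcases Set.eq_singleton_or_nontrivial hCne.some_mem with h | h
        · exact absurd (h ▸ hloops hCne.some) hC.2.1
        · exact h
      obtain ⟨j, hjC, k, hkC, hjk⟩ := hCnt
      refine ⟨j, hjC, k, hkC, hjk, ?_, ?_⟩
      · rw [hvF j (hCF hjC), hvF k (hCF hkC)]
      · intro i hi
        rw [hvF j (hCF hjC), hvF i (hCF hi)]
    · obtain ⟨e, heC, heF⟩ := Set.not_subset.mp hCF
      have : ∃ e' ∈ C, e' ∉ F ∧ e' ≠ e := by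
        by_contra h
        push_neg at h
        have hsub : C \ {e} ⊆ F := by
          intro x hx
          by_contra hxF
          exact hx.2 (h x hx.1 hxF)
        have hssub : C \ {e} ⊂ C := Set.sdiff_singleton_ssubset.mpr heC
        have hind : M.Indep (C \ {e}) := hC.2.2 _ hssub
        have heCd : e ∉ C \ {e} := fun h ↦ h.2 rfl
        have hdep : M.Dep (insert e (C \ {e})) := by
          rw [Set.insert_diff_singleton, Set.insert_eq_of_mem heC]
          exact ⟨hC.2.1, hC.1⟩
        have hecl : e ∈ M.closure (C \ {e}) :=
          (hind.mem_closure_iff_of_notMem heCd).mpr hdep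
        have : e ∈ F := by
          have h1 : M.closure (C \ {e}) ⊆ M.closure F := M.closure_subset_closure hsub
          rw [hF.closure] at h1
          exact h1 hecl
        exact heF this
      obtain ⟨e', he'C, he'F, he'e⟩ := this
      refine ⟨e, heC, e', he'C, Ne.symm he'e, ?_, ?_⟩
      · rw [hvnF e heF, hvnF e' he'F]
      · intro i hi
        rw [hvnF e heF]
        exact hvnonneg i
end

section
/- Let M be a matroid on the ground set [n] = {1,...,n} with no loops and no coloops, and let v ∈ Trop(M). Then there exists a basis B of M of maximal v-weight such that for every k ∈ [n] − B and every l ∈ C(k,B) with l ≠ k and v_l = v_k, one has l < k. (Such a basis is obtained by taking the lexicographically first basis of maximal v-weight; this yields the regressive property underlying the cyclic Bergman fan.) -/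
/-- Summing an indicator over an inserted element. -/
lemma sum_indicator_insert' {n : ℕ} {G : Type*} [AddCommMonoid G] (f : Fin n → G)
    (T : Set (Fin n)) (k : Fin n) (hk : k ∉ T) :
    ∑ i, (insert k T).indicator f i = f k + ∑ i, T.indicator f i := by
  classical
  have h1 : insert k T = {k} ∪ T := by simp [Set.singleton_union]
  have hdisj : Disjoint ({k} : Set (Fin n)) T := by simpa using hk
  rw [h1, Set.indicator_union_of_disjoint hdisj, Finset.sum_add_distrib]
  congr 1
  rw [Fintype.sum_eq_single k]
  · simp
  · intro i hi
    exact Set.indicator_of_notMem (by simpa using hi) f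

/-- Every dependent subset of the ground set contains a circuit. -/
lemma exists_circuitOf_subset_s9 {n : ℕ} (M : Matroid (Fin n)) {X : Set (Fin n)}
    (hXE : X ⊆ M.E) (hX : ¬ M.Indep X) : ∃ C, C ⊆ X ∧ IsCircuitOf M C := by
  set s : Set ℕ := {m | ∃ Y, Y ⊆ X ∧ ¬ M.Indep Y ∧ Y.ncard = m} with hs
  have hne : s.Nonempty := ⟨X.ncard, X, subset_rfl, hX, rfl⟩
  obtain ⟨Y, hYX, hYdep, hYcard⟩ := Nat.sInf_mem hne
  refine ⟨Y, hYX, hYX.trans hXE, hYdep, fun D hD => ?_⟩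
  by_contra hDdep
  have hlt : D.ncard < Y.ncard := Set.ncard_lt_ncard hD (Set.toFinite Y)
  have : sInf s ≤ D.ncard := Nat.sInf_le ⟨D, hD.subset.trans hYX, hDdep, rfl⟩
  omega

/-- The key exchange step. -/
lemma exchange_step {n : ℕ} (M : Matroid (Fin n)) (hE : M.E = Set.univ)
    {B : Set (Fin n)} (hB : M.IsBase B) {k l : Fin n} (hk : k ∉ B)
    (hl : l ∈ fundCircuitOf M k B) (hlk : l ≠ k) :
    l ∈ B ∧ M.IsBase (insert k (B \ {l})) := by
  have hdep : ¬ M.Indep (insert k B) :=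
    (hB.insert_dep ⟨by simp [hE], hk⟩).not_indep
  obtain ⟨C0, hC0X, hC0⟩ := exists_circuitOf_subset_s9 M (by rw [hE]; exact Set.subset_univ _) hdep
  have hC0mem : C0 ∈ {C | IsCircuitOf M C ∧ C ⊆ insert k B} := ⟨hC0, hC0X⟩
  have hlB : l ∈ B := by
    have := Set.sInter_subset_of_mem hC0mem hl
    rcases hC0X this with h | h
    · exact absurd h hlk
    · exact h
  have hkl : k ≠ l := fun h => hk (h ▸ hlB)
  have heq : insert k (B \ {l}) = (insert k B) \ {l} := by
    rw [Set.insert_diff_of_notMem _ (by simpa using hkl)]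
  have hindep : M.Indep (insert k (B \ {l})) := by
    by_contra hdep'
    obtain ⟨C', hC'sub, hC'⟩ := exists_circuitOf_subset_s9 M
      (by rw [hE]; exact Set.subset_univ _) hdep'
    have hC'mem : C' ∈ {C | IsCircuitOf M C ∧ C ⊆ insert k B} :=
      ⟨hC', hC'sub.trans (by rw [heq]; exact Set.diff_subset)⟩
    have hlC' : l ∈ C' := Set.sInter_subset_of_mem hC'mem hl
    have : l ∈ (insert k B) \ {l} := heq ▸ hC'sub hlC'
    simp at this
  exact ⟨hlB, hB.exchange_isBase_of_indep hk hindep⟩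

/-- For a matroid `M` on `[n]` with no loops and no coloops and any
`v ∈ Trop(M)`, there is a basis `B` of maximal `v`-weight such that for every
`k ∈ [n] - B`, every `l ∈ C(k,B)` with `l ≠ k` and `v l = v k` satisfies `l < k`
(the regressive property underlying the cyclic Bergman fan). -/
theorem statement9 {n : ℕ} (M : Matroid (Fin n)) (hE : M.E = Set.univ)
    (hloops : ∀ e, M.Indep {e})
    (hcoloops : ∀ e, ∃ B, M.IsBase B ∧ e ∉ B)
    (v : Fin n → ℝ) (hv : InTrop M v) :
    ∃ B : Set (Fin n), M.IsBase B ∧ (∀ B', M.IsBase B' → weightOf v B' ≤ weightOf v B) ∧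
      ∀ k ∉ B, ∀ l ∈ fundCircuitOf M k B, l ≠ k → v l = v k → l < k := by
  classical
  -- maximize weight
  obtain ⟨B0, hB0, hmax0⟩ := Set.exists_max_image {B | M.IsBase B} (weightOf v)
    (Set.toFinite _) M.exists_isBase
  set S : Set (Set (Fin n)) :=
    {B | M.IsBase B ∧ ∀ B', M.IsBase B' → weightOf v B' ≤ weightOf v B} with hS
  have hSne : S.Nonempty := ⟨B0, hB0, hmax0⟩
  -- among max-weight bases, minimize g
  set g : Set (Fin n) → ℕ := fun T => ∑ i, T.indicator (fun i => 2 ^ (i : ℕ)) i with hg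
  set s : Set ℕ := {m | ∃ B ∈ S, g B = m} with hs
  have hsne : s.Nonempty := ⟨g B0, B0, ⟨hB0, hmax0⟩, rfl⟩
  obtain ⟨B, hBS, hgB⟩ := Nat.sInf_mem hsne
  obtain ⟨hB, hBmax⟩ := hBS
  refine ⟨B, hB, hBmax, fun k hk l hl hlk hvl => ?_⟩
  by_contra hnlt
  have hklt : k < l := lt_of_le_of_ne (le_of_not_gt hnlt) (Ne.symm hlk)
  obtain ⟨hlB, hB'⟩ := exchange_step M hE hB hk hl hlk
  set B' : Set (Fin n) := insert k (B \ {l}) with hB'def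
  have hknB : k ∉ B \ {l} := fun h => hk h.1
  have hlnB : l ∉ B \ {l} := by simp
  have hBsplit : B = insert l (B \ {l}) := by
    rw [Set.insert_diff_singleton, Set.insert_eq_self.2 hlB]
  -- weights are equal
  have hwB' : weightOf v B' = weightOf v B := by
    rw [weightOf, weightOf, hB'def, sum_indicator_insert' v _ k hknB]
    conv_rhs => rw [hBsplit, sum_indicator_insert' v _ l hlnB]
    rw [hvl]
  have hB'S : B' ∈ S := ⟨hB', fun B'' hB'' => hwB' ▸ hBmax B'' hB''⟩
  -- g strictly decreases
  have hgB' : g B' < g B := by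
    rw [hg, hB'def]
    simp only
    rw [sum_indicator_insert' _ _ k hknB]
    conv_rhs => rw [hBsplit, sum_indicator_insert' _ _ l hlnB]
    have : (2:ℕ) ^ (k : ℕ) < 2 ^ (l : ℕ) :=
      Nat.pow_lt_pow_right one_lt_two hklt
    omega
  have : sInf s ≤ g B' := Nat.sInf_le ⟨B', hB'S, rfl⟩
  omega
end
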